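/- arXiv:1601.01875 — 5 statements merged into one kernel-verified Lean document; each statement's English description precedes it below -/
import Mathlib

section
/- Polar decomposition of matrices (Theorem 2.8): Let A be an invertible real n×n matrix and let Σ₀ be a symmetric positive definite n×n matrix. Then there exist a unique symmetric positive definite matrix P and a unique matrix Q satisfying Q Σ₀ Qᵀ = Σ₀ such that A = P Q. -/
open Matrix

/-- A real square matrix is symmetric positive definite. -/
def IsSPD {n : ℕ} (M : Matrix (Fin n) (Fin n) ℝ) : Prop :=
  Mᵀ = M ∧ ∀ x : Fin n → ℝ, x ≠ 0 → 0 < x ⬝ᵥ (M *ᵥ x)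

namespace PolarAux

variable {n : ℕ}

open scoped MatrixOrder

lemma isSPD_iff_posDef (M : Matrix (Fin n) (Fin n) ℝ) : IsSPD M ↔ M.PosDef := by
  rw [Matrix.posDef_iff_dotProduct_mulVec]
  unfold IsSPD Matrix.IsHermitian
  simp [conjTranspose_eq_transpose_of_trivial]

lemma posDef_congr {M B : Matrix (Fin n) (Fin n) ℝ} (hM : M.PosDef) (hB : IsUnit B) :
    (B * M * Bᵀ).PosDef := by
  have hMh : Mᴴ = M := hM.1
  have hBt : IsUnit Bᵀ := by
    rw [Matrix.isUnit_iff_isUnit_det, det_transpose, ← Matrix.isUnit_iff_isUnit_det]; exact hB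
  rw [Matrix.posDef_iff_dotProduct_mulVec]
  constructor
  · show (B * M * Bᵀ)ᴴ = _
    simp only [conjTranspose_eq_transpose_of_trivial] at hMh ⊢
    simp [transpose_mul, Matrix.mul_assoc, hMh]
  · intro x hx
    have hx' : Bᵀ *ᵥ x ≠ 0 := fun h => hx <| by
      have := Matrix.mulVec_injective_iff_isUnit.mpr hBt (a₁ := x) (a₂ := 0)
      simpa [Matrix.mulVec_zero, h] using this
    have key : star x ⬝ᵥ ((B * M * Bᵀ) *ᵥ x) = star (Bᵀ *ᵥ x) ⬝ᵥ (M *ᵥ (Bᵀ *ᵥ x)) := by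
      simp only [star_trivial]
      rw [← mulVec_mulVec, ← mulVec_mulVec, dotProduct_mulVec, ← mulVec_transpose]
    rw [key]
    exact hM.dotProduct_mulVec_pos hx'

lemma posDef_of_posSemidef_isUnit {M : Matrix (Fin n) (Fin n) ℝ}
    (h : M.PosSemidef) (hu : IsUnit M) : M.PosDef := by
  refine Matrix.PosDef.of_dotProduct_mulVec_pos h.1 fun x hx =>
    lt_of_le_of_ne (h.dotProduct_mulVec_nonneg x) fun he => hx ?_
  have h0 : M *ᵥ x = 0 := (h.dotProduct_mulVec_zero_iff x).mp he.symm
  have := Matrix.mulVec_injective_iff_isUnit.mpr hu (a₁ := x) (a₂ := 0)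
  simpa [Matrix.mulVec_zero, h0] using this

lemma isUnit_of_sq_posDef {B : Matrix (Fin n) (Fin n) ℝ} {S : Matrix (Fin n) (Fin n) ℝ}
    (hS : S.PosDef) (h : B * B = S) : IsUnit B := by
  rw [Matrix.isUnit_iff_isUnit_det]
  have : B.det * B.det = S.det := by rw [← det_mul, h]
  have hSd : S.det ≠ 0 := ne_of_gt hS.det_pos
  rw [isUnit_iff_ne_zero]
  intro h0; rw [h0, mul_zero] at this; exact hSd this.symm

/-- Uniqueness of the positive definite solution of `X * S * X = M`. -/
lemma sol_unique {S M X Y : Matrix (Fin n) (Fin n) ℝ} (hS : S.PosDef)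
    (hX : X.PosDef) (hY : Y.PosDef) (hXS : X * S * X = M) (hYS : Y * S * Y = M) : X = Y := by
  set B := CFC.sqrt S with hBdef
  have hB : B.PosSemidef := Matrix.nonneg_iff_posSemidef.mp (CFC.sqrt_nonneg S)
  have hBB : B * B = S := CFC.sqrt_mul_sqrt_self S (Matrix.nonneg_iff_posSemidef.mpr hS.posSemidef)
  have hBu : IsUnit B := isUnit_of_sq_posDef hS hBB
  have hBsym : Bᵀ = B := by
    have h2 : Bᴴ = B := hB.1
    rwa [conjTranspose_eq_transpose_of_trivial] at h2
  have hXB : (B * X * B).PosSemidef := by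
    have := (posDef_congr hX hBu).posSemidef; rwa [hBsym] at this
  have hYB : (B * Y * B).PosSemidef := by
    have := (posDef_congr hY hBu).posSemidef; rwa [hBsym] at this
  have hsq : (B * X * B) ^ 2 = (B * Y * B) ^ 2 := by
    have e1 : (B * X * B) ^ 2 = B * M * B := by
      rw [pow_two, ← hXS, ← hBB]; noncomm_ring
    have e2 : (B * Y * B) ^ 2 = B * M * B := by
      rw [pow_two, ← hYS, ← hBB]; noncomm_ring
    rw [e1, e2]
  have heq : B * X * B = B * Y * B := (CFC.sq_eq_sq_iff _ _ (Matrix.nonneg_iff_posSemidef.mpr hXB)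
    (Matrix.nonneg_iff_posSemidef.mpr hYB)).mp hsq
  have hdet : IsUnit B.det := (Matrix.isUnit_iff_isUnit_det B).mp hBu
  have := congrArg (fun Z => B⁻¹ * Z * B⁻¹) heq
  simpa [Matrix.mul_assoc, Matrix.nonsing_inv_mul_cancel_left _ _ hdet,
    Matrix.mul_nonsing_inv_cancel_left _ _ hdet,
    Matrix.mul_nonsing_inv_cancel_right _ _ hdet,
    Matrix.nonsing_inv_mul_cancel_right _ _ hdet] using this

/-- Existence of a positive definite solution of `X * S * X = M`. -/
lemma sol_exists {S M : Matrix (Fin n) (Fin n) ℝ} (hS : S.PosDef) (hM : M.PosDef) :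
    ∃ P : Matrix (Fin n) (Fin n) ℝ, P.PosDef ∧ P * S * P = M := by
  set B := CFC.sqrt S with hBdef
  have hB : B.PosSemidef := Matrix.nonneg_iff_posSemidef.mp (CFC.sqrt_nonneg S)
  have hBB : B * B = S := CFC.sqrt_mul_sqrt_self S (Matrix.nonneg_iff_posSemidef.mpr hS.posSemidef)
  have hBu : IsUnit B := isUnit_of_sq_posDef hS hBB
  have hdet : IsUnit B.det := (Matrix.isUnit_iff_isUnit_det B).mp hBu
  have hBsym : Bᵀ = B := by
    have h2 : Bᴴ = B := hB.1
    rwa [conjTranspose_eq_transpose_of_trivial] at h2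
  have hN : (B * M * B).PosDef := by
    have := posDef_congr hM hBu; rwa [hBsym] at this
  set R := CFC.sqrt (B * M * B) with hRdef
  have hR : R.PosSemidef := Matrix.nonneg_iff_posSemidef.mp (CFC.sqrt_nonneg _)
  have hRR : R * R = B * M * B :=
    CFC.sqrt_mul_sqrt_self _ (Matrix.nonneg_iff_posSemidef.mpr hN.posSemidef)
  have hRu : IsUnit R := isUnit_of_sq_posDef hN hRR
  have hRpd : R.PosDef := posDef_of_posSemidef_isUnit hR hRu
  have hBiu : IsUnit (B⁻¹) := Matrix.isUnit_nonsing_inv_iff.mpr hBu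
  have hBisym : (B⁻¹)ᵀ = B⁻¹ := by rw [Matrix.transpose_nonsing_inv, hBsym]
  refine ⟨B⁻¹ * R * B⁻¹, ?_, ?_⟩
  · have := posDef_congr hRpd hBiu; rwa [hBisym] at this
  · rw [← hBB]
    calc B⁻¹ * R * B⁻¹ * (B * B) * (B⁻¹ * R * B⁻¹)
        = B⁻¹ * (R * R) * B⁻¹ := by
          simp [Matrix.mul_assoc, Matrix.nonsing_inv_mul_cancel_left _ _ hdet,
            Matrix.mul_nonsing_inv_cancel_left _ _ hdet]
      _ = M := by
          rw [hRR]
          simp [Matrix.mul_assoc, Matrix.nonsing_inv_mul_cancel_left _ _ hdet,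
            Matrix.mul_nonsing_inv_cancel_left _ _ hdet,
            Matrix.mul_nonsing_inv_cancel_right _ _ hdet,
            Matrix.nonsing_inv_mul_cancel_right _ _ hdet]

end PolarAux

open PolarAux in
/-- Polar decomposition of matrices (Theorem 2.8): for an invertible `A` and a symmetric
positive definite `S₀`, there exist a unique symmetric positive definite `P` and a unique
`Q ∈ O(n, S₀)` (i.e. invertible with `Q S₀ Qᵀ = S₀`) such that `A = P Q`. -/
theorem polar_decomposition_of_matrices {n : ℕ} (A S₀ : Matrix (Fin n) (Fin n) ℝ)
    (hA : IsUnit A) (hS₀ : IsSPD S₀) :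
    ∃ P Q : Matrix (Fin n) (Fin n) ℝ,
      IsSPD P ∧ (IsUnit Q ∧ Q * S₀ * Qᵀ = S₀) ∧ A = P * Q ∧
      (∀ P' Q' : Matrix (Fin n) (Fin n) ℝ,
        IsSPD P' → (IsUnit Q' ∧ Q' * S₀ * Q'ᵀ = S₀) → A = P' * Q' → P' = P ∧ Q' = Q) := by
  rw [isSPD_iff_posDef] at hS₀
  have hAd : IsUnit A.det := (Matrix.isUnit_iff_isUnit_det A).mp hA
  -- M = A S₀ Aᵀ is positive definite
  have hM : (A * S₀ * Aᵀ).PosDef := posDef_congr hS₀ hA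
  obtain ⟨P, hP, hPS⟩ := sol_exists hS₀ hM
  have hPu : IsUnit P := hP.isUnit
  have hPd : IsUnit P.det := (Matrix.isUnit_iff_isUnit_det P).mp hPu
  have hPsym : Pᵀ = P := by
    have h2 : Pᴴ = P := hP.1
    rwa [conjTranspose_eq_transpose_of_trivial] at h2
  have hPisym : (P⁻¹)ᵀ = P⁻¹ := by rw [Matrix.transpose_nonsing_inv, hPsym]
  refine ⟨P, P⁻¹ * A, (isSPD_iff_posDef P).mpr hP, ⟨?_, ?_⟩, ?_, ?_⟩
  · exact (Matrix.isUnit_nonsing_inv_iff.mpr hPu).mul hA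
  · -- (P⁻¹ A) S₀ (P⁻¹ A)ᵀ = S₀
    rw [transpose_mul, hPisym]
    have : P⁻¹ * A * S₀ * (Aᵀ * P⁻¹) = P⁻¹ * (A * S₀ * Aᵀ) * P⁻¹ := by
      simp [Matrix.mul_assoc]
    rw [this, ← hPS]
    simp [Matrix.mul_assoc, Matrix.nonsing_inv_mul_cancel_left _ _ hPd,
      Matrix.mul_nonsing_inv_cancel_left _ _ hPd,
      Matrix.mul_nonsing_inv_cancel_right _ _ hPd,
      Matrix.nonsing_inv_mul_cancel_right _ _ hPd]
  · rw [← Matrix.mul_assoc, Matrix.mul_nonsing_inv _ hPd, Matrix.one_mul]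
  · rintro P' Q' hP' ⟨hQ'u, hQ'S⟩ hAPQ
    rw [isSPD_iff_posDef] at hP'
    have hP'sym : P'ᵀ = P' := by
      have h2 : P'ᴴ = P' := hP'.1
      rwa [conjTranspose_eq_transpose_of_trivial] at h2
    have hP'S : P' * S₀ * P' = A * S₀ * Aᵀ := by
      rw [hAPQ, transpose_mul, hP'sym]
      symm
      calc P' * Q' * S₀ * (Q'ᵀ * P') = P' * (Q' * S₀ * Q'ᵀ) * P' := by
            simp [Matrix.mul_assoc]
        _ = P' * S₀ * P' := by rw [hQ'S]
    have hPP : P' = P := sol_unique hS₀ hP' hP hP'S hPS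
    have hP'd : IsUnit P'.det := (Matrix.isUnit_iff_isUnit_det P').mp hP'.isUnit
    refine ⟨hPP, ?_⟩
    rw [hAPQ, hPP, ← Matrix.mul_assoc, Matrix.nonsing_inv_mul _ hPd, Matrix.one_mul]
end

section
/- Hessian of the lifted relative entropy (Lemma 2.12): Let Σ₀ and Σ₁ be symmetric positive definite n×n real matrices and define F on invertible matrices by F(B) = n/2 − ½ tr(Σ₁⁻¹ B Σ₀ Bᵀ) + log det B + ½ log(det Σ₀ / det Σ₁). Let A be invertible with det A > 0 and let Ȧ be any n×n matrix, and let γ(t) = A + t Ȧ. Then the second derivative of t ↦ F(γ(t)) at t = 0 equals −tr(Ȧ A⁻¹ Ȧ A⁻¹) − tr(Σ₀ Ȧᵀ Σ₁⁻¹ Ȧ). -/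
open Matrix Polynomial

attribute [local instance] Matrix.linftyOpNormedAddCommGroup Matrix.linftyOpNormedSpace
  Matrix.linftyOpNormedRing Matrix.linftyOpNormedAlgebra

lemma detDerivZero {n : ℕ} (B D : Matrix (Fin n) (Fin n) ℝ) (h : IsUnit B.det) :
    HasDerivAt (fun s : ℝ => (B + s • D).det) (B.det * ((B⁻¹ * D).trace)) 0 := by
  set M := B⁻¹ * D with hM
  set E := (Matrix.det (1 + (X : ℝ[X]) • M.map C)).divX.divX with hE
  have key : ∀ s : ℝ, (B + s • D).det = B.det * (1 + M.trace * s + E.eval s * s ^ 2) := by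
    intro s
    have hfac : B + s • D = B * (1 + s • M) := by
      rw [Matrix.mul_add, mul_one, Matrix.mul_smul, hM, ← Matrix.mul_assoc,
        Matrix.mul_nonsing_inv _ h, Matrix.one_mul]
    rw [hfac, det_mul, Matrix.det_one_add_smul]
  have h1 : HasDerivAt (fun s : ℝ => 1 + M.trace * s + E.eval s * s ^ 2) M.trace 0 := by
    have ha : HasDerivAt (fun s : ℝ => M.trace * s) (M.trace * 1) 0 :=
      (hasDerivAt_id 0).const_mul M.trace
    have hb : HasDerivAt (fun s : ℝ => E.eval s * s ^ 2)
        (E.derivative.eval 0 * 0 ^ 2 + E.eval 0 * ((2 : ℕ) * 0 ^ 1)) 0 :=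
      (E.hasDerivAt 0).mul (hasDerivAt_pow 2 0)
    have := (ha.const_add 1).add hb
    exact this.congr_deriv (by ring)
  have h2 := h1.const_mul B.det
  have h3 : HasDerivAt (fun s : ℝ => (B + s • D).det) (B.det * M.trace) 0 := by
    simp only [key]; exact h2
  exact h3

lemma detDerivAt {n : ℕ} (B D : Matrix (Fin n) (Fin n) ℝ) (t₀ : ℝ)
    (h : IsUnit (B + t₀ • D).det) :
    HasDerivAt (fun t : ℝ => (B + t • D).det)
      ((B + t₀ • D).det * (((B + t₀ • D)⁻¹ * D).trace)) t₀ := by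
  have h0 := detDerivZero (B + t₀ • D) D h
  have h0' : HasDerivAt (fun s : ℝ => ((B + t₀ • D) + s • D).det)
      ((B + t₀ • D).det * (((B + t₀ • D)⁻¹ * D).trace)) (-t₀ + t₀) := by
    simpa using h0
  have := h0'.comp_const_add (-t₀) t₀
  convert this using 1
  · rfl
  · rfl
  funext t
  congr 1
  module

lemma invTraceDeriv {n : ℕ} (A Adot : Matrix (Fin n) (Fin n) ℝ) (h : IsUnit A.det) :
    HasDerivAt (fun t : ℝ => ((A + t • Adot)⁻¹ * Adot).trace)
      (-(A⁻¹ * Adot * A⁻¹ * Adot).trace) 0 := by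
  obtain ⟨u, hu⟩ := (Matrix.isUnit_iff_isUnit_det A).mpr h
  have path : HasDerivAt (fun t : ℝ => A + t • Adot) Adot 0 := by
    exact (((hasDerivAt_id (0 : ℝ)).smul_const Adot).const_add A).congr_deriv (one_smul ℝ Adot)
  have hinv : HasFDerivAt Ring.inverse
      (-ContinuousLinearMap.mulLeftRight ℝ _ ↑u⁻¹ ↑u⁻¹) (A + (0 : ℝ) • Adot) := by
    simpa [← hu] using hasFDerivAt_ringInverse (𝕜 := ℝ) u
  have comp := hinv.comp_hasDerivAt 0 path
  set L : Matrix (Fin n) (Fin n) ℝ →L[ℝ] ℝ :=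
    LinearMap.toContinuousLinearMap
      ((Matrix.traceLinearMap (Fin n) ℝ ℝ).comp (LinearMap.mulRight ℝ Adot)) with hLdef
  have final := L.hasFDerivAt.comp_hasDerivAt 0 comp
  have hcoe : ((u⁻¹ : (Matrix (Fin n) (Fin n) ℝ)ˣ) : Matrix (Fin n) (Fin n) ℝ) = A⁻¹ := by
    rw [Matrix.coe_units_inv, hu]
  simp only [Function.comp, hLdef, LinearMap.coe_toContinuousLinearMap', LinearMap.coe_comp,
    ContinuousLinearMap.coe_comp', ContinuousLinearMap.neg_apply,
    ContinuousLinearMap.mulLeftRight_apply, hcoe,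
    LinearMap.comp_apply, LinearMap.mulRight_apply, Matrix.traceLinearMap_apply] at final
  convert final using 1
  · rfl
  · rfl
  · funext t
    simp [Function.comp, ← Matrix.nonsing_inv_eq_ringInverse]
  · show _ = Matrix.trace (-(A⁻¹ * Adot * A⁻¹) * Adot)
    simp [Matrix.neg_mul, mul_assoc]

/-- Hessian of the lifted relative entropy (Lemma 2.12): along the straight line
`γ(t) = A + t Ȧ`, the second derivative at `t = 0` of
`t ↦ F(γ(t)) = n/2 − ½ tr(S₁⁻¹ γ(t) S₀ γ(t)ᵀ) + log det γ(t) + ½ log(det S₀ / det S₁)`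
equals `−tr(Ȧ A⁻¹ Ȧ A⁻¹) − tr(S₀ Ȧᵀ S₁⁻¹ Ȧ)`. -/
theorem hessian_lifted_relative_entropy {n : ℕ}
    (S₀ S₁ A Adot : Matrix (Fin n) (Fin n) ℝ)
    (hS₀ : IsSPD S₀) (hS₁ : IsSPD S₁) (hA : 0 < A.det) :
    deriv (deriv (fun t : ℝ =>
        (n : ℝ) / 2 - (1 / 2) * (S₁⁻¹ * (A + t • Adot) * S₀ * (A + t • Adot)ᵀ).trace
          + Real.log (A + t • Adot).det + (1 / 2) * Real.log (S₀.det / S₁.det))) 0 =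
      -(Adot * A⁻¹ * Adot * A⁻¹).trace - (S₀ * Adotᵀ * S₁⁻¹ * Adot).trace := by
  set a : ℝ := (S₁⁻¹ * A * S₀ * Aᵀ).trace with ha
  set b : ℝ := (S₁⁻¹ * Adot * S₀ * Aᵀ).trace + (S₁⁻¹ * A * S₀ * Adotᵀ).trace with hb
  set c : ℝ := (S₁⁻¹ * Adot * S₀ * Adotᵀ).trace with hc
  have qexp : ∀ s : ℝ, (S₁⁻¹ * (A + s • Adot) * S₀ * (A + s • Adot)ᵀ).trace
      = a + b * s + c * s ^ 2 := by
    intro s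
    simp only [ha, hb, hc, transpose_add, transpose_smul, Matrix.mul_add, Matrix.add_mul,
      Matrix.mul_smul, Matrix.smul_mul, trace_add, trace_smul, smul_eq_mul, smul_smul]
    ring
  -- positivity of det near 0
  have hcont : Continuous (fun t : ℝ => (A + t • Adot).det) :=
    Continuous.matrix_det (continuous_const.add (continuous_id.smul continuous_const))
  have hdet0 : (A + (0 : ℝ) • Adot).det = A.det := by simp
  have hpos : ∀ᶠ t : ℝ in nhds 0, 0 < (A + t • Adot).det := by
    have := hcont.continuousAt (x := 0)
    rw [ContinuousAt, hdet0] at this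
    exact this.eventually (eventually_gt_nhds hA)
  set f : ℝ → ℝ := fun t =>
      (n : ℝ) / 2 - (1 / 2) * (S₁⁻¹ * (A + t • Adot) * S₀ * (A + t • Adot)ᵀ).trace
        + Real.log (A + t • Adot).det + (1 / 2) * Real.log (S₀.det / S₁.det) with hf
  set h : ℝ → ℝ := fun t => -(1 / 2) * (b + 2 * c * t) + ((A + t • Adot)⁻¹ * Adot).trace
    with hh
  have hderiv : ∀ t : ℝ, 0 < (A + t • Adot).det → HasDerivAt f (h t) t := by
    intro t hpt
    have hunit : IsUnit (A + t • Adot).det := (isUnit_iff_ne_zero).mpr (ne_of_gt hpt)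
    have hdet := detDerivAt A Adot t hunit
    have hlog : HasDerivAt (fun s : ℝ => Real.log (A + s • Adot).det)
        (((A + t • Adot)⁻¹ * Adot).trace) t := by
      have := hdet.log (ne_of_gt hpt)
      convert this using 1
      field_simp
    have hq : HasDerivAt (fun s : ℝ => a + b * s + c * s ^ 2) (b + 2 * c * t) t := by
      have ha' : HasDerivAt (fun s : ℝ => b * s) (b * 1) t := (hasDerivAt_id t).const_mul b
      have hb' : HasDerivAt (fun s : ℝ => c * s ^ 2) (c * ((2 : ℕ) * t ^ 1)) t :=
        (hasDerivAt_pow 2 t).const_mul c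
      have := (ha'.const_add a).add hb'
      exact this.congr_deriv (by push_cast; ring)
    have H1 : HasDerivAt (fun s : ℝ => (n : ℝ) / 2 - (1 / 2) * (a + b * s + c * s ^ 2))
        (-((1 / 2) * (b + 2 * c * t))) t := ((hq.const_mul (1 / 2)).const_sub ((n : ℝ) / 2))
    have H2 := (H1.add hlog).add_const ((1 / 2) * Real.log (S₀.det / S₁.det))
    have : HasDerivAt f (-((1 / 2) * (b + 2 * c * t)) + ((A + t • Adot)⁻¹ * Adot).trace) t := by
      rw [hf]
      simp only [qexp]
      exact H2
    convert this using 1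
    rw [hh]; ring
  have ev : deriv f =ᶠ[nhds 0] h := hpos.mono fun t ht => (hderiv t ht).deriv
  rw [ev.deriv_eq]
  -- compute deriv h 0
  have hAunit : IsUnit A.det := isUnit_iff_ne_zero.mpr (ne_of_gt hA)
  have hlin : HasDerivAt (fun t : ℝ => -(1 / 2) * (b + 2 * c * t)) (-c) 0 := by
    have : HasDerivAt (fun t : ℝ => b + 2 * c * t) (2 * c * 1) 0 :=
      ((hasDerivAt_id 0).const_mul (2 * c)).const_add b
    have h2 := this.const_mul (-(1 / 2))
    exact h2.congr_deriv (by ring)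
  have htr := invTraceDeriv A Adot hAunit
  have hH : HasDerivAt h (-c + -(A⁻¹ * Adot * A⁻¹ * Adot).trace) 0 :=
    hlin.add htr
  rw [hH.deriv]
  have e1 : (A⁻¹ * Adot * A⁻¹ * Adot).trace = (Adot * A⁻¹ * Adot * A⁻¹).trace := by
    rw [trace_mul_comm, ← Matrix.mul_assoc, ← Matrix.mul_assoc]
  have e2 : c = (S₀ * Adotᵀ * S₁⁻¹ * Adot).trace := by
    rw [hc, Matrix.mul_assoc, trace_mul_comm, ← Matrix.mul_assoc, Matrix.mul_assoc,
      trace_mul_comm (S₀ * Adotᵀ)]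
  rw [e1, e2]
  ring
end

section
/- Transversality of the polar cone and the fibers (Lemma 2.15): Let Σ₀ and P be symmetric positive definite n×n real matrices, and let Ṗ be a symmetric n×n real matrix. If tr(Σ₀ Ṗ S P) = 0 for every symmetric n×n matrix S, then Ṗ = 0. -/
open Matrix

lemma isSPD_posDef {n : ℕ} {M : Matrix (Fin n) (Fin n) ℝ} (h : IsSPD M) : M.PosDef := by
  refine Matrix.PosDef.of_dotProduct_mulVec_pos ?_ ?_
  · rw [Matrix.IsHermitian, conjTranspose_eq_transpose_of_trivial, h.1]
  · intro x hx
    simpa using h.2 x hx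

lemma trace_mul_transpose_self_eq_zero {n : ℕ} {M : Matrix (Fin n) (Fin n) ℝ}
    (h : (M * Mᵀ).trace = 0) : M = 0 := by
  have : ∀ i j, M i j = 0 := by
    have h' : ∑ i, ∑ j, (M i j)^2 = 0 := by
      rw [← h]; simp [Matrix.trace, Matrix.mul_apply, Matrix.diag, sq]
    intro i j
    have := (Finset.sum_eq_zero_iff_of_nonneg (fun i _ => Finset.sum_nonneg
      (fun j _ => sq_nonneg (M i j)))).1 h' i (Finset.mem_univ i)
    have := (Finset.sum_eq_zero_iff_of_nonneg (fun j _ => sq_nonneg (M i j))).1 this j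
      (Finset.mem_univ j)
    exact pow_eq_zero_iff (by norm_num) |>.1 this
  ext i j; exact this i j

section
open scoped MatrixOrder

noncomputable def msqrt {n : ℕ} (A : Matrix (Fin n) (Fin n) ℝ) : Matrix (Fin n) (Fin n) ℝ :=
  CFC.sqrt A

lemma msqrt_mul_self {n : ℕ} {A : Matrix (Fin n) (Fin n) ℝ} (hA : A.PosSemidef) :
    msqrt A * msqrt A = A := CFC.sqrt_mul_sqrt_self A hA.nonneg

lemma msqrt_posSemidef {n : ℕ} (A : Matrix (Fin n) (Fin n) ℝ) : (msqrt A).PosSemidef :=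
  (CFC.sqrt_nonneg A).posSemidef

end

/-- Transversality of the polar cone and the fibers (Lemma 2.15): if `S₀` and `P` are
symmetric positive definite, `Ṗ` is symmetric, and `tr(S₀ Ṗ S P) = 0` for every symmetric
`S`, then `Ṗ = 0`. -/
theorem polar_cone_transversal {n : ℕ} (S₀ P Pdot : Matrix (Fin n) (Fin n) ℝ)
    (hS₀ : IsSPD S₀) (hP : IsSPD P) (hPdot : Pdotᵀ = Pdot)
    (h : ∀ S : Matrix (Fin n) (Fin n) ℝ, Sᵀ = S → (S₀ * Pdot * S * P).trace = 0) :
    Pdot = 0 := by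
  have hPd : P.PosDef := isSPD_posDef hP
  have hSd : S₀.PosDef := isSPD_posDef hS₀
  -- symmetry of P⁻¹
  have hPinv : (P⁻¹)ᵀ = P⁻¹ := by rw [transpose_nonsing_inv, hP.1]
  -- S := P⁻¹ * Pdot * P⁻¹ is symmetric
  have hSsym : (P⁻¹ * Pdot * P⁻¹)ᵀ = P⁻¹ * Pdot * P⁻¹ := by
    simp [transpose_mul, hPinv, hPdot, mul_assoc]
  have h0 := h _ hSsym
  -- simplify: S₀ * Pdot * (P⁻¹ * Pdot * P⁻¹) * P = S₀ * Pdot * P⁻¹ * Pdot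
  have hPunit : IsUnit P.det := hPd.det_pos.ne'.isUnit
  have key : (S₀ * Pdot * P⁻¹ * Pdot).trace = 0 := by
    have : S₀ * Pdot * (P⁻¹ * Pdot * P⁻¹) * P = S₀ * Pdot * P⁻¹ * Pdot := by
      simp [Matrix.mul_assoc, Matrix.nonsing_inv_mul P hPunit]
    rwa [this] at h0
  -- square roots
  set Q := msqrt P with hQdef
  set R := msqrt S₀ with hRdef
  have hQQ : Q * Q = P := msqrt_mul_self hPd.posSemidef
  have hRR : R * R = S₀ := msqrt_mul_self hSd.posSemidef
  have hQsym : Qᵀ = Q := by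
    have := (msqrt_posSemidef P).1
    rwa [Matrix.IsHermitian, conjTranspose_eq_transpose_of_trivial] at this
  have hRsym : Rᵀ = R := by
    have := (msqrt_posSemidef S₀).1
    rwa [Matrix.IsHermitian, conjTranspose_eq_transpose_of_trivial] at this
  have hQunit : IsUnit Q.det := by
    have : IsUnit (Q.det * Q.det) := by rw [← det_mul, hQQ]; exact hPunit
    exact isUnit_of_mul_isUnit_left this
  have hRunit : IsUnit R.det := by
    have : IsUnit (R.det * R.det) := by
      rw [← det_mul, hRR]; exact hSd.det_pos.ne'.isUnit
    exact isUnit_of_mul_isUnit_left this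
  have hPinvQQ : P⁻¹ = Q⁻¹ * Q⁻¹ := by
    rw [← hQQ, Matrix.mul_inv_rev]
  have hQinvsym : (Q⁻¹)ᵀ = Q⁻¹ := by rw [transpose_nonsing_inv, hQsym]
  -- let M = R * Pdot * Q⁻¹. Then tr (M * Mᵀ) = tr (S₀ * Pdot * P⁻¹ * Pdot)
  set M := R * Pdot * Q⁻¹ with hMdef
  have hMt : Mᵀ = Q⁻¹ * Pdot * R := by
    simp [hMdef, transpose_mul, hQinvsym, hPdot, hRsym, mul_assoc]
  have htr : (M * Mᵀ).trace = 0 := by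
    rw [hMt]
    have e1 : M * (Q⁻¹ * Pdot * R) = R * (Pdot * P⁻¹ * Pdot * R) := by
      rw [hMdef, hPinvQQ]; noncomm_ring
    have e2 : Pdot * P⁻¹ * Pdot * R * R = Pdot * P⁻¹ * Pdot * S₀ := by
      rw [mul_assoc (Pdot * P⁻¹ * Pdot) R R, hRR]
    rw [e1, Matrix.trace_mul_comm R, e2, Matrix.trace_mul_comm _ S₀,
      ← mul_assoc, ← mul_assoc]
    exact key
  have hM0 : M = 0 := trace_mul_transpose_self_eq_zero htr
  -- Pdot = R⁻¹ * M * Q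
  have : Pdot = R⁻¹ * M * Q := by
    rw [hMdef, Matrix.mul_assoc R⁻¹ _ Q, Matrix.nonsing_inv_mul_cancel_right _ _ hQunit,
      Matrix.nonsing_inv_mul_cancel_left _ _ hRunit]
  rw [this, hM0, Matrix.mul_zero, Matrix.zero_mul]
end

section
/- Unique maximum of the lifted entropy on the polar cone (part of Theorem 2.16): Let Σ₀ and Σ₁ be symmetric positive definite n×n real matrices, and define, for symmetric positive definite P, F(P) = n/2 − ½ tr(Σ₁⁻¹ P Σ₀ P) + log det P + ½ log(det Σ₀ / det Σ₁). Then F attains a unique maximum over the set of symmetric positive definite matrices; the maximizer P∞ is the unique symmetric positive definite matrix satisfying P∞ Σ₀ P∞ = Σ₁, the maximum value is F(P∞) = 0, and F(P) < 0 for every symmetric positive definite P ≠ P∞. -/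
open Matrix

/-- The lifted relative entropy functional restricted to the polar cone:
`F(P) = n/2 − ½ tr(S₁⁻¹ P S₀ P) + log det P + ½ log(det S₀ / det S₁)`. -/
noncomputable def liftedEntropy {n : ℕ} (S₀ S₁ P : Matrix (Fin n) (Fin n) ℝ) : ℝ :=
  (n : ℝ) / 2 - (1 / 2) * (S₁⁻¹ * P * S₀ * P).trace
    + Real.log P.det + (1 / 2) * Real.log (S₀.det / S₁.det)

section Helpers
variable {n : ℕ}

lemma isSPD_iff_posDef {M : Matrix (Fin n) (Fin n) ℝ} : IsSPD M ↔ M.PosDef := by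
  constructor
  · rintro ⟨h1, h2⟩
    exact posDef_iff_dotProduct_mulVec.mpr ⟨by rwa [Matrix.IsHermitian, conjTranspose_eq_transpose_of_trivial],
      fun x hx => by simpa using h2 x hx⟩
  · intro h
    obtain ⟨h1, h2⟩ := posDef_iff_dotProduct_mulVec.mp h
    exact ⟨by rwa [Matrix.IsHermitian, conjTranspose_eq_transpose_of_trivial] at h1,
      fun x hx => by simpa using h2 hx⟩

lemma posDef_of_posSemidef_det_ne_zero {A : Matrix (Fin n) (Fin n) ℝ}
    (hA : A.PosSemidef) (h : A.det ≠ 0) : A.PosDef := by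
  exact hA.posDef_iff_det_ne_zero.mpr h

lemma exists_posDef_sqrt {A : Matrix (Fin n) (Fin n) ℝ} (hA : A.PosDef) :
    ∃ R : Matrix (Fin n) (Fin n) ℝ, R.PosDef ∧ R * R = A := by
  open scoped MatrixOrder in
  refine ⟨CFC.sqrt A, posDef_of_posSemidef_det_ne_zero (CFC.sqrt_nonneg A).posSemidef ?_,
    CFC.sqrt_mul_sqrt_self A hA.posSemidef.nonneg⟩
  intro h
  open scoped MatrixOrder in
  have := CFC.sqrt_mul_sqrt_self A hA.posSemidef.nonneg
  have hdet : A.det = 0 := by rw [← this, det_mul, h, mul_zero]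
  exact hA.det_pos.ne' hdet

lemma posDef_conj {A B : Matrix (Fin n) (Fin n) ℝ} (hA : A.PosDef) (hB : B.det ≠ 0) :
    (Bᵀ * A * B).PosDef := by
  refine posDef_of_posSemidef_det_ne_zero ?_ ?_
  · have := hA.posSemidef.conjTranspose_mul_mul_same B
    rwa [conjTranspose_eq_transpose_of_trivial] at this
  · simp only [det_mul, det_transpose]
    exact mul_ne_zero (mul_ne_zero hB hA.det_pos.ne') hB

lemma trace_eq_sum_eigenvalues {A : Matrix (Fin n) (Fin n) ℝ} (hA : A.IsHermitian) :
    A.trace = ∑ i, hA.eigenvalues i := by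
  conv_lhs => rw [hA.spectral_theorem, Unitary.conjStarAlgAut_apply]
  rw [trace_mul_cycle]
  have h1 : (star hA.eigenvectorUnitary : Matrix (Fin n) (Fin n) ℝ) *
      (hA.eigenvectorUnitary : Matrix (Fin n) (Fin n) ℝ) = 1 := by
    exact (Matrix.mem_unitaryGroup_iff').mp hA.eigenvectorUnitary.2
  rw [h1, Matrix.one_mul, trace_diagonal]
  simp [RCLike.ofReal]

lemma eq_one_of_eigenvalues_eq_one {A : Matrix (Fin n) (Fin n) ℝ} (hA : A.IsHermitian)
    (h : ∀ i, hA.eigenvalues i = 1) : A = 1 := by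
  have hd : diagonal (RCLike.ofReal ∘ hA.eigenvalues) = (1 : Matrix (Fin n) (Fin n) ℝ) := by
    have : (RCLike.ofReal ∘ hA.eigenvalues : Fin n → ℝ) = fun _ => (1:ℝ) := by
      funext i; simp [h i, RCLike.ofReal]
    rw [this, diagonal_one]
  rw [hA.spectral_theorem, hd, Unitary.conjStarAlgAut_apply, Matrix.mul_one]
  exact (Matrix.mem_unitaryGroup_iff).mp hA.eigenvectorUnitary.2

lemma key_ineq {M : Matrix (Fin n) (Fin n) ℝ} (hM : M.PosDef) (hne : M ≠ 1) :
    (n : ℝ) / 2 - (1 / 2) * M.trace + (1 / 2) * Real.log M.det < 0 := by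
  set lam := hM.1.eigenvalues with hlam
  have hpos : ∀ i, 0 < lam i := hM.eigenvalues_pos
  have htr : M.trace = ∑ i, lam i := trace_eq_sum_eigenvalues hM.1
  have hdet : M.det = ∏ i, lam i := by
    have := hM.1.det_eq_prod_eigenvalues
    simpa [RCLike.ofReal] using this
  have hlog : Real.log M.det = ∑ i, Real.log (lam i) := by
    rw [hdet, Real.log_prod (fun i _ => (hpos i).ne')]
  obtain ⟨i₀, hi₀⟩ : ∃ i, lam i ≠ 1 := by
    by_contra hc
    push_neg at hc
    exact hne (eq_one_of_eigenvalues_eq_one hM.1 hc)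
  have hsum : ∑ i, (1 - lam i + Real.log (lam i)) < 0 := by
    have hle : ∀ i ∈ Finset.univ, (1 - lam i + Real.log (lam i)) ≤ 0 := fun i _ => by
      have := Real.log_le_sub_one_of_pos (hpos i); linarith
    have hlt : 1 - lam i₀ + Real.log (lam i₀) < 0 := by
      have := Real.log_lt_sub_one_of_pos (hpos i₀) hi₀; linarith
    have := Finset.sum_lt_sum (g := fun _ : Fin n => (0:ℝ)) hle
      ⟨i₀, Finset.mem_univ _, hlt⟩
    simpa using this
  have hn : (n : ℝ) = ∑ _i : Fin n, (1 : ℝ) := by simp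
  rw [htr, hlog, hn]
  rw [Finset.sum_add_distrib, Finset.sum_sub_distrib] at hsum
  ring_nf
  ring_nf at hsum
  linarith [hsum]

lemma posDef_transpose_eq {A : Matrix (Fin n) (Fin n) ℝ} (hA : A.PosDef) : Aᵀ = A := by
  have := hA.1
  rwa [Matrix.IsHermitian, conjTranspose_eq_transpose_of_trivial] at this

end Helpers

/-- Unique maximum of the lifted entropy on the polar cone (part of Theorem 2.16): `F` attains
a unique maximum over symmetric positive definite matrices; the maximizer `P∞` is the unique
symmetric positive definite solution of `P∞ S₀ P∞ = S₁`, the maximum value is `F(P∞) = 0`, and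
`F(P) < 0` for every other symmetric positive definite `P`. -/
theorem lifted_entropy_unique_max {n : ℕ} (S₀ S₁ : Matrix (Fin n) (Fin n) ℝ)
    (hS₀ : IsSPD S₀) (hS₁ : IsSPD S₁) :
    ∃ Pinf : Matrix (Fin n) (Fin n) ℝ,
      IsSPD Pinf ∧ Pinf * S₀ * Pinf = S₁ ∧
      (∀ P : Matrix (Fin n) (Fin n) ℝ, IsSPD P → P * S₀ * P = S₁ → P = Pinf) ∧
      liftedEntropy S₀ S₁ Pinf = 0 ∧
      (∀ P : Matrix (Fin n) (Fin n) ℝ, IsSPD P → P ≠ Pinf → liftedEntropy S₀ S₁ P < 0) := by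
  have hS₀' := isSPD_iff_posDef.mp hS₀
  have hS₁' := isSPD_iff_posDef.mp hS₁
  obtain ⟨R, hR, hRR⟩ := exists_posDef_sqrt hS₀'
  obtain ⟨R₁, hR₁, hR₁R⟩ := exists_posDef_sqrt hS₁'
  have hRd : R.det ≠ 0 := hR.det_pos.ne'
  have hR₁d : R₁.det ≠ 0 := hR₁.det_pos.ne'
  have hRu : IsUnit R.det := hRd.isUnit
  have hR₁u : IsUnit R₁.det := hR₁d.isUnit
  have hRT : Rᵀ = R := posDef_transpose_eq hR
  have hR₁T : R₁ᵀ = R₁ := posDef_transpose_eq hR₁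
  have hRiT : R⁻¹ᵀ = R⁻¹ := by rw [transpose_nonsing_inv, hRT]
  have hR₁iT : R₁⁻¹ᵀ = R₁⁻¹ := by rw [transpose_nonsing_inv, hR₁T]
  have e1 : R⁻¹ * R = 1 := nonsing_inv_mul R hRu
  have e2 : R * R⁻¹ = 1 := mul_nonsing_inv R hRu
  have f1 : R₁⁻¹ * R₁ = 1 := nonsing_inv_mul R₁ hR₁u
  have f2 : R₁ * R₁⁻¹ = 1 := mul_nonsing_inv R₁ hR₁u
  have hRid : R⁻¹.det ≠ 0 := by
    have h1 : R⁻¹.det * R.det = 1 := by rw [← det_mul, e1, det_one]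
    intro h; rw [h, zero_mul] at h1; exact zero_ne_one h1
  have hR₁id : R₁⁻¹.det ≠ 0 := by
    have h1 : R₁⁻¹.det * R₁.det = 1 := by rw [← det_mul, f1, det_one]
    intro h; rw [h, zero_mul] at h1; exact zero_ne_one h1
  -- construct Pinf
  have hQ : (R * S₁ * R).PosDef := by
    have := posDef_conj (n := n) hS₁' hRd
    rwa [hRT] at this
  obtain ⟨T, hT, hTT⟩ := exists_posDef_sqrt hQ
  set Pinf := R⁻¹ * T * R⁻¹ with hPinf
  have hPinfPD : Pinf.PosDef := by
    have := posDef_conj (n := n) hT hRid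
    rwa [hRiT] at this
  have hsol : Pinf * S₀ * Pinf = S₁ := by
    have h1 : Pinf * S₀ * Pinf = R⁻¹ * (T * ((R⁻¹ * R) * (R * R⁻¹)) * T) * R⁻¹ := by
      rw [hPinf, ← hRR]; noncomm_ring
    rw [h1, e1, e2, Matrix.one_mul, Matrix.mul_one, hTT]
    have h2 : R⁻¹ * (R * S₁ * R) * R⁻¹ = (R⁻¹ * R) * S₁ * (R * R⁻¹) := by noncomm_ring
    rw [h2, e1, e2, Matrix.one_mul, Matrix.mul_one]
  -- uniqueness
  have huniq : ∀ P : Matrix (Fin n) (Fin n) ℝ, P.PosDef → P * S₀ * P = S₁ → P = Pinf := by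
    intro P hP hPS
    have hWW : (R * P * R) * (R * P * R) = R * S₁ * R := by
      rw [← hPS, ← hRR]; noncomm_ring
    have hW : (R * P * R).PosDef := by
      have := posDef_conj (n := n) hP hRd
      rwa [hRT] at this
    have hWT : R * P * R = T :=
      by
        open scoped MatrixOrder in
        rw [← CFC.sqrt_unique hWW hW.posSemidef.nonneg, CFC.sqrt_unique hTT hT.posSemidef.nonneg]
    calc P = (R⁻¹ * R) * P * (R * R⁻¹) := by rw [e1, e2, Matrix.one_mul, Matrix.mul_one]
      _ = R⁻¹ * (R * P * R) * R⁻¹ := by noncomm_ring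
      _ = Pinf := by rw [hWT]
  -- entropy representation
  have hrepr : ∀ P : Matrix (Fin n) (Fin n) ℝ, P.PosDef →
      liftedEntropy S₀ S₁ P = (n : ℝ) / 2
        - (1 / 2) * (R₁⁻¹ * (P * S₀ * P) * R₁⁻¹).trace
        + (1 / 2) * Real.log ((R₁⁻¹ * (P * S₀ * P) * R₁⁻¹).det) := by
    intro P hP
    set M := R₁⁻¹ * (P * S₀ * P) * R₁⁻¹ with hM
    have hS₁inv : S₁⁻¹ = R₁⁻¹ * R₁⁻¹ := by rw [← hR₁R, Matrix.mul_inv_rev]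
    have htr : (S₁⁻¹ * P * S₀ * P).trace = M.trace := by
      rw [hS₁inv, hM]
      have : R₁⁻¹ * R₁⁻¹ * P * S₀ * P = R₁⁻¹ * (R₁⁻¹ * (P * S₀ * P)) := by noncomm_ring
      rw [this, trace_mul_comm]
    have hdetS₁ : R₁.det * R₁.det = S₁.det := by rw [← det_mul, hR₁R]
    have hdetM : M.det = P.det ^ 2 * (S₀.det / S₁.det) := by
      rw [hM]
      simp only [det_mul, det_nonsing_inv, Ring.inverse_eq_inv]
      field_simp [← hdetS₁]
      rw [← hdetS₁]
      ring
    have hPdet : 0 < P.det := hP.det_pos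
    have hratio : 0 < S₀.det / S₁.det := div_pos hS₀'.det_pos hS₁'.det_pos
    have hlog : Real.log M.det = 2 * Real.log P.det + Real.log (S₀.det / S₁.det) := by
      rw [hdetM, Real.log_mul (pow_ne_zero 2 hPdet.ne') hratio.ne', Real.log_pow]
      push_cast; ring
    rw [liftedEntropy, htr, hlog]
    ring
  -- M = 1 iff solution
  have hMone : ∀ P : Matrix (Fin n) (Fin n) ℝ,
      (R₁⁻¹ * (P * S₀ * P) * R₁⁻¹ = 1 ↔ P * S₀ * P = S₁) := by
    intro P
    constructor
    · intro h
      have : R₁ * (R₁⁻¹ * (P * S₀ * P) * R₁⁻¹) * R₁ = R₁ * 1 * R₁ := by rw [h]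
      rw [Matrix.mul_one] at this
      have h2 : R₁ * (R₁⁻¹ * (P * S₀ * P) * R₁⁻¹) * R₁
          = (R₁ * R₁⁻¹) * (P * S₀ * P) * (R₁⁻¹ * R₁) := by noncomm_ring
      rw [h2, f2, f1, Matrix.one_mul, Matrix.mul_one] at this
      rw [this, hR₁R]
    · intro h
      rw [h, ← hR₁R]
      have : R₁⁻¹ * (R₁ * R₁) * R₁⁻¹ = (R₁⁻¹ * R₁) * (R₁ * R₁⁻¹) := by noncomm_ring
      rw [this, f1, f2, Matrix.one_mul]
  refine ⟨Pinf, isSPD_iff_posDef.mpr hPinfPD, hsol,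
    fun P hP hPS => huniq P (isSPD_iff_posDef.mp hP) hPS, ?_, ?_⟩
  · rw [hrepr Pinf hPinfPD, (hMone Pinf).mpr hsol]
    simp [trace_one]
    ring
  · intro P hP hne
    have hP' := isSPD_iff_posDef.mp hP
    rw [hrepr P hP']
    have hMpd : (R₁⁻¹ * (P * S₀ * P) * R₁⁻¹).PosDef := by
      have hPSP : (P * S₀ * P).PosDef := by
        have := posDef_conj (n := n) hS₀' hP'.det_pos.ne'
        rwa [posDef_transpose_eq hP'] at this
      have := posDef_conj (n := n) hPSP hR₁id
      rwa [hR₁iT] at this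
    apply key_ineq hMpd
    intro h1
    exact hne (huniq P hP' ((hMone P).mp h1))
end

section
/- Double bracket form of the entropy gradient flow (Corollary 3.20): Let N be an n×n real matrix and let W : ℝ → (n×n real matrices) be a differentiable curve of invertible matrices satisfying Ẇ(t) = ½ [W(t), [W(t)⁻¹, N]] for all t. Then the curve Σ(t) = W(t)⁻¹ satisfies the double bracket equation Σ̇(t) = ½ [Σ(t), [Σ(t), N]] for all t. -/
open Matrix

/-- Double bracket form of the entropy gradient flow (Corollary 3.20): if a differentiable
curve `W(t)` of invertible matrices satisfies `Ẇ = ½ [W, [W⁻¹, N]]`, then `Σ(t) = W(t)⁻¹`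
satisfies `Σ̇ = ½ [Σ, [Σ, N]]`, where `[A, B] = A B − B A`. -/
theorem double_bracket_flow {n : ℕ} (N : Matrix (Fin n) (Fin n) ℝ)
    (W : ℝ → Matrix (Fin n) (Fin n) ℝ)
    (hinv : ∀ t : ℝ, IsUnit (W t))
    (hW : ∀ (t : ℝ) (i j : Fin n),
      HasDerivAt (fun s => W s i j)
        (((1 / 2 : ℝ) • (W t * ((W t)⁻¹ * N - N * (W t)⁻¹)
            - ((W t)⁻¹ * N - N * (W t)⁻¹) * W t)) i j) t) :
    ∀ (t : ℝ) (i j : Fin n),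
      HasDerivAt (fun s => (W s)⁻¹ i j)
        (((1 / 2 : ℝ) • ((W t)⁻¹ * ((W t)⁻¹ * N - N * (W t)⁻¹)
            - ((W t)⁻¹ * N - N * (W t)⁻¹) * (W t)⁻¹)) i j) t := by
  intro t
  letI : NormedRing (Matrix (Fin n) (Fin n) ℝ) := Matrix.linftyOpNormedRing
  letI : NormedAlgebra ℝ (Matrix (Fin n) (Fin n) ℝ) := Matrix.linftyOpNormedAlgebra
  haveI : CompleteSpace (Matrix (Fin n) (Fin n) ℝ) :=
    FiniteDimensional.complete ℝ _
  -- identity continuous linear equiv to the Pi-normed space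
  let e : Matrix (Fin n) (Fin n) ℝ ≃L[ℝ] (Fin n → Fin n → ℝ) :=
    (LinearEquiv.refl ℝ (Matrix (Fin n) (Fin n) ℝ)).toContinuousLinearEquiv
  set B : Matrix (Fin n) (Fin n) ℝ := (W t)⁻¹ * N - N * (W t)⁻¹ with hB
  set V : Matrix (Fin n) (Fin n) ℝ := (1 / 2 : ℝ) • (W t * B - B * W t) with hV
  have hWmat : HasDerivAt W V t := by
    have hpi : HasDerivAt (fun s => e (W s)) (e V) t :=
      hasDerivAt_pi.2 fun i => hasDerivAt_pi.2 fun j => hW t i j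
    exact (e.symm : (Fin n → Fin n → ℝ) →L[ℝ] Matrix (Fin n) (Fin n) ℝ).hasFDerivAt.comp_hasDerivAt
      t hpi
  have hu := hinv t
  have hdet : IsUnit (W t).det := (Matrix.isUnit_iff_isUnit_det _).mp hu
  have hcoe : (↑hu.unit⁻¹ : Matrix (Fin n) (Fin n) ℝ) = (W t)⁻¹ := by
    rw [Matrix.nonsing_inv_eq_ringInverse, ← Ring.inverse_unit hu.unit]
    congr 1
  have hfd := (hasFDerivAt_ringInverse (𝕜 := ℝ) hu.unit).comp_hasDerivAt t hWmat
  have hinvderiv : HasDerivAt (fun s => Ring.inverse (W s))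
      (-((W t)⁻¹ * V * (W t)⁻¹)) t := by
    convert hfd using 1
    · rfl
    · rfl
    · rfl
    · rfl
    · simp [ContinuousLinearMap.mulLeftRight_apply, hcoe, mul_assoc]
  have h1 : (W t)⁻¹ * W t = 1 := Matrix.nonsing_inv_mul _ hdet
  have h2 : W t * (W t)⁻¹ = 1 := Matrix.mul_nonsing_inv _ hdet
  have key : (W t)⁻¹ * (W t * B - B * W t) * (W t)⁻¹
      = B * (W t)⁻¹ - (W t)⁻¹ * B := by
    calc (W t)⁻¹ * (W t * B - B * W t) * (W t)⁻¹
        = ((W t)⁻¹ * W t) * (B * (W t)⁻¹) - ((W t)⁻¹ * B) * (W t * (W t)⁻¹) := by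
          noncomm_ring
      _ = B * (W t)⁻¹ - (W t)⁻¹ * B := by rw [h1, h2, one_mul, mul_one]
  have hval : -((W t)⁻¹ * V * (W t)⁻¹)
      = (1 / 2 : ℝ) • ((W t)⁻¹ * B - B * (W t)⁻¹) := by
    rw [hV, Matrix.mul_smul, Matrix.smul_mul, key, ← smul_neg, neg_sub]
  have hfinal : HasDerivAt (fun s => (W s)⁻¹)
      ((1 / 2 : ℝ) • ((W t)⁻¹ * B - B * (W t)⁻¹)) t := by
    rw [← hval]
    refine hinvderiv.congr_of_eventuallyEq ?_
    filter_upwards with s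
    rw [Matrix.nonsing_inv_eq_ringInverse]
  intro i j
  have hpi2 := (e : Matrix (Fin n) (Fin n) ℝ →L[ℝ] (Fin n → Fin n → ℝ)).hasFDerivAt.comp_hasDerivAt
    t hfinal
  exact hasDerivAt_pi.1 (hasDerivAt_pi.1 hpi2 i) j
end
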